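/- Let σ ∈ ℝ and let K ∈ C¹([0,∞);ℝ) satisfy K(t) ≥ 0 and (d/dt)(e^{σt}K(t)) ≤ 0 for all t ≥ 0. Let Ψ̃ ∈ C([0,∞);ℝ) and suppose Ψ ∈ C([0,∞);ℝ) satisfies the Volterra integral equation Ψ(t) + ∫₀^t Ψ(τ)K(t−τ) dτ = Ψ̃(t) for all t ≥ 0. Then |Ψ(t) − Ψ̃(t)| ≤ K(0) ∫₀^t e^{−σ(t−τ)} |Ψ̃(τ)| dτ for all t ≥ 0. (Lemma 6.2.) -/

import Mathlib

open Set Real intervalIntegral MeasureTheory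

private lemma ftc_hasDerivAt {f : ℝ → ℝ} (hf : Continuous f) (s : ℝ) :
    HasDerivAt (fun x => ∫ τ in (0:ℝ)..x, f τ) (f s) s :=
  intervalIntegral.integral_hasDerivAt_right (hf.intervalIntegrable 0 s)
    hf.stronglyMeasurable.stronglyMeasurableAtFilter hf.continuousAt

private lemma ftc_cont {f : ℝ → ℝ} (hf : Continuous f) :
    Continuous (fun x => ∫ τ in (0:ℝ)..x, f τ) :=
  continuous_iff_continuousAt.mpr fun x => (ftc_hasDerivAt hf x).continuousAt

private lemma contOn_comp_sub {F : ℝ → ℝ} (hF : ContinuousOn F (Ici 0)) {s : ℝ} (hs : 0 ≤ s) :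
    ContinuousOn (fun τ => F (s - τ)) (uIcc 0 s) := by
  rw [uIcc_of_le hs]
  exact hF.comp (continuous_const.sub continuous_id).continuousOn
    (fun τ hτ => mem_Ici.mpr (by linarith [hτ.2]))

private lemma conv_ibp (G Gd u : ℝ → ℝ)
    (hG : ∀ s, 0 ≤ s → HasDerivAt G (Gd s) s)
    (hGdcont : ContinuousOn Gd (Ici 0))
    (hu : Continuous u) {s : ℝ} (hs : 0 ≤ s) :
    (∫ τ in (0:ℝ)..s, u τ * G (s - τ))
      = G 0 * (∫ τ in (0:ℝ)..s, u τ)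
        + ∫ τ in (0:ℝ)..s, Gd (s - τ) * (∫ x in (0:ℝ)..τ, u x) := by
  set P : ℝ → ℝ := fun τ => ∫ x in (0:ℝ)..τ, u x with hP
  have h1 : ∀ x ∈ uIcc (0:ℝ) s, HasDerivAt (fun τ => G (s - τ)) (-Gd (s - x)) x := by
    intro x hx
    rw [uIcc_of_le hs] at hx
    have hd : HasDerivAt (fun τ : ℝ => s - τ) (-1) x := (hasDerivAt_id x).const_sub s
    have := (hG (s - x) (by linarith [hx.2])).comp x hd
    rw [mul_neg_one] at this; exact this
  have h2 : ∀ x ∈ uIcc (0:ℝ) s, HasDerivAt P (u x) x := fun x _ => ftc_hasDerivAt hu x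
  have h3 : IntervalIntegrable (fun τ => -Gd (s - τ)) volume 0 s :=
    ((contOn_comp_sub hGdcont hs).neg).intervalIntegrable
  have h4 : IntervalIntegrable u volume 0 s := hu.intervalIntegrable 0 s
  have key := intervalIntegral.integral_mul_deriv_eq_deriv_mul h1 h2 h3 h4
  have hc : (∫ τ in (0:ℝ)..s, u τ * G (s - τ)) = ∫ τ in (0:ℝ)..s, G (s - τ) * u τ := by
    apply intervalIntegral.integral_congr; intro τ _; exact mul_comm _ _
  rw [hc, key]
  have hP0 : P 0 = 0 := intervalIntegral.integral_same
  simp only [sub_self, sub_zero, hP0, mul_zero, neg_mul]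
  rw [intervalIntegral.integral_neg]
  ring

private lemma primitive_mono {f : ℝ → ℝ} (hf : Continuous f) (hf0 : ∀ x, 0 ≤ f x)
    {x y : ℝ} (hxy : x ≤ y) : (∫ τ in (0:ℝ)..x, f τ) ≤ ∫ τ in (0:ℝ)..y, f τ := by
  have h : (∫ τ in (0:ℝ)..y, f τ) = (∫ τ in (0:ℝ)..x, f τ) + ∫ τ in x..y, f τ :=
    (intervalIntegral.integral_add_adjacent_intervals
      (hf.intervalIntegrable 0 x) (hf.intervalIntegrable x y)).symm
  have h2 : 0 ≤ ∫ τ in x..y, f τ := intervalIntegral.integral_nonneg hxy (fun τ _ => hf0 τ)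
  linarith


private lemma gd_integral {G Gd : ℝ → ℝ}
    (hG : ∀ s, 0 ≤ s → HasDerivAt G (Gd s) s)
    (hGdcont : ContinuousOn Gd (Ici 0)) {s : ℝ} (hs : 0 ≤ s) :
    (∫ τ in (0:ℝ)..s, Gd (s - τ)) = G s - G 0 := by
  rw [intervalIntegral.integral_comp_sub_left (fun x => Gd x) s]
  simp only [sub_self, sub_zero]
  exact intervalIntegral.integral_eq_sub_of_hasDerivAt
    (fun x hx => hG x (by rw [uIcc_of_le hs] at hx; exact hx.1))
    ((hGdcont.mono (by rw [uIcc_of_le hs]; exact fun x hx => hx.1)).intervalIntegrable)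

private lemma upper_bound (G Gd u g : ℝ → ℝ)
    (hG : ∀ s, 0 ≤ s → HasDerivAt G (Gd s) s)
    (hGdcont : ContinuousOn Gd (Ici 0))
    (hGpos : ∀ s, 0 ≤ s → 0 ≤ G s)
    (hGdneg : ∀ s, 0 ≤ s → Gd s ≤ 0)
    (hu : Continuous u) (hg : Continuous g)
    (heq : ∀ s, 0 ≤ s → u s + ∫ τ in (0:ℝ)..s, u τ * G (s - τ) = g s) :
    ∀ T, 0 ≤ T → (∫ τ in (0:ℝ)..T, u τ) ≤ ∫ τ in (0:ℝ)..T, max (g τ) 0 := by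
  intro T hT
  set gp : ℝ → ℝ := fun τ => max (g τ) 0 with hgpdef
  have hgp : Continuous gp := hg.max continuous_const
  set P : ℝ → ℝ := fun x => ∫ τ in (0:ℝ)..x, u τ with hPdef
  set Q : ℝ → ℝ := fun x => ∫ τ in (0:ℝ)..x, gp τ with hQdef
  have hPcont : Continuous P := ftc_cont hu
  have hQcont : Continuous Q := ftc_cont hgp
  have hQnonneg : ∀ x, 0 ≤ x → 0 ≤ Q x := fun x hx =>
    intervalIntegral.integral_nonneg hx (fun τ _ => le_max_right _ _)
  have hQmono : ∀ x y, 0 ≤ x → x ≤ y → Q x ≤ Q y := by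
    intro x y hx hxy
    have : Q y = Q x + ∫ τ in x..y, gp τ := by
      rw [hQdef]
      exact (intervalIntegral.integral_add_adjacent_intervals
        (hgp.intervalIntegrable 0 x) (hgp.intervalIntegrable x y)).symm
    rw [this]
    have : 0 ≤ ∫ τ in x..y, gp τ :=
      intervalIntegral.integral_nonneg hxy (fun τ _ => le_max_right _ _)
    linarith
  suffices h : ∀ ε : ℝ, 0 < ε → P T ≤ Q T + ε * (1 + T) by
    refine le_of_forall_pos_le_add fun δ hδ => ?_
    have h1T : (0:ℝ) < 1 + T := by linarith
    have h2 := h (δ / (1 + T)) (div_pos hδ h1T)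
    have h3 : δ / (1 + T) * (1 + T) = δ := div_mul_cancel₀ δ (ne_of_gt h1T)
    simp only [hPdef, hQdef] at h2
    linarith
  intro ε hε
  by_contra hcon
  push_neg at hcon
  set W : ℝ → ℝ := fun x => P x - Q x - ε * (1 + x) with hWdef
  have hWcont : Continuous W := (hPcont.sub hQcont).sub (by continuity)
  have hW0 : W 0 < 0 := by
    simp only [hWdef, hPdef, hQdef, intervalIntegral.integral_same]
    norm_num; linarith
  have hWT : 0 < W T := by simp only [hWdef]; linarith
  set S : Set ℝ := {x | x ∈ Icc 0 T ∧ 0 ≤ W x} with hSdef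
  have hne : S.Nonempty := ⟨T, ⟨⟨hT, le_refl _⟩, le_of_lt hWT⟩⟩
  have hbdd : BddBelow S := ⟨0, fun x hx => hx.1.1⟩
  have hclosed : IsClosed S := by
    have : S = Icc 0 T ∩ {x | 0 ≤ W x} := rfl
    rw [this]
    exact isClosed_Icc.inter (isClosed_le continuous_const hWcont)
  set c := sInf S with hcdef
  have hmem : c ∈ S := hclosed.csInf_mem hne hbdd
  have hcT : c ∈ Icc 0 T := hmem.1
  have hWc : 0 ≤ W c := hmem.2
  have hlt : ∀ x, 0 ≤ x → x < c → W x < 0 := by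
    intro x hx hxc
    by_contra h
    push_neg at h
    have : c ≤ x := csInf_le hbdd ⟨⟨hx, le_trans (le_of_lt hxc) hcT.2⟩, h⟩
    linarith
  have hcpos : 0 < c := by
    rcases lt_or_eq_of_le hcT.1 with h | h
    · exact h
    · exfalso; rw [← h] at hWc; linarith
  -- W c = 0 by left limit
  have hWc0 : W c = 0 := by
    refine le_antisymm ?_ hWc
    have htend : Filter.Tendsto W (nhdsWithin c (Iio c)) (nhds (W c)) :=
      hWcont.continuousAt.continuousWithinAt.tendsto
    refine le_of_tendsto htend ?_
    filter_upwards [Ioo_mem_nhdsLT_of_mem (show c ∈ Ioc 0 c from ⟨hcpos, le_refl _⟩)] with x hx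
    exact le_of_lt (hlt x (le_of_lt hx.1) hx.2)
  have hPc : P c = Q c + ε * (1 + c) := by
    have : P c - Q c - ε * (1 + c) = 0 := hWc0
    linarith
  set m : ℝ := Q c + ε * (1 + c) with hmdef
  have hmpos : 0 < m := by
    have := hQnonneg c hcT.1
    have : 0 < ε * (1 + c) := by positivity
    linarith [hQnonneg c hcT.1]
  have hPle : ∀ τ, τ ∈ Icc (0:ℝ) c → P τ ≤ m := by
    intro τ hτ
    rcases lt_or_eq_of_le hτ.2 with h | h
    · have := hlt τ hτ.1 h
      have h2 : P τ ≤ Q τ + ε * (1 + τ) := by simp only [hWdef] at this; linarith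
      have h3 : Q τ ≤ Q c := hQmono τ c hτ.1 hτ.2
      have h4 : ε * (1 + τ) ≤ ε * (1 + c) := by nlinarith [hτ.2]
      linarith
    · rw [h, hPc]
  -- estimate u c ≤ gp c
  have hkey : u c ≤ gp c := by
    have hibp := conv_ibp G Gd u hG hGdcont hu hcT.1
    have heqc := heq c hcT.1
    -- u c = g c - G 0 * P c - ∫ Gd (c-τ) * P τ
    have hI : (∫ τ in (0:ℝ)..c, Gd (c - τ) * P τ) ≥ (G c - G 0) * m := by
      have hmono : ∀ τ ∈ Icc (0:ℝ) c, Gd (c - τ) * m ≤ Gd (c - τ) * P τ := by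
        intro τ hτ
        have hGd0 : Gd (c - τ) ≤ 0 := hGdneg _ (by linarith [hτ.2])
        exact mul_le_mul_of_nonpos_left (hPle τ hτ) hGd0
      have hint1 : IntervalIntegrable (fun τ => Gd (c - τ) * m) volume 0 c :=
        ((contOn_comp_sub hGdcont hcT.1).mul continuousOn_const).intervalIntegrable
      have hint2 : IntervalIntegrable (fun τ => Gd (c - τ) * P τ) volume 0 c :=
        ((contOn_comp_sub hGdcont hcT.1).mul hPcont.continuousOn).intervalIntegrable
      have := intervalIntegral.integral_mono_on hcT.1 hint1 hint2 hmono
      calc (G c - G 0) * m = (∫ τ in (0:ℝ)..c, Gd (c - τ)) * m := by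
            rw [gd_integral hG hGdcont hcT.1]
        _ = ∫ τ in (0:ℝ)..c, Gd (c - τ) * m := (intervalIntegral.integral_mul_const _ _).symm
        _ ≤ ∫ τ in (0:ℝ)..c, Gd (c - τ) * P τ := this
    have huc : u c = g c - G 0 * P c - ∫ τ in (0:ℝ)..c, Gd (c - τ) * P τ := by
      rw [hibp] at heqc; simp only [hPdef]; linarith [heqc]
    have hGc : 0 ≤ G c := hGpos c hcT.1
    have : u c ≤ g c - G 0 * m - (G c - G 0) * m := by
      rw [huc, hPc]; linarith [hI]
    have : u c ≤ g c - G c * m := by linarith [this]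
    have : u c ≤ g c := by nlinarith [hGc, hmpos]
    exact le_trans this (le_max_left _ _)
  -- derivative contradiction
  have hWd : HasDerivAt W (u c - gp c - ε) c := by
    have h1 : HasDerivAt P (u c) c := ftc_hasDerivAt hu c
    have h2 : HasDerivAt Q (gp c) c := ftc_hasDerivAt hgp c
    have h3 : HasDerivAt (fun x : ℝ => ε * (1 + x)) ε c := by
      simpa using ((hasDerivAt_id c).const_add (1:ℝ)).const_mul ε
    exact (h1.sub h2).sub h3
  have hslope : (0:ℝ) ≤ u c - gp c - ε := by
    have hdw : HasDerivWithinAt W (u c - gp c - ε) (Iio c) c := hWd.hasDerivWithinAt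
    have htend := hasDerivWithinAt_iff_tendsto_slope.mp hdw
    rw [show Iio c \ {c} = Iio c by simp [Set.diff_singleton_eq_self]] at htend
    refine ge_of_tendsto htend ?_
    filter_upwards [Ioo_mem_nhdsLT_of_mem (show c ∈ Ioc 0 c from ⟨hcpos, le_refl _⟩),
      self_mem_nhdsWithin] with x hx hx'
    have hWx : W x < 0 := hlt x (le_of_lt hx.1) hx.2
    have : slope W c x = (W x - W c) / (x - c) := slope_def_field W c x
    rw [this, hWc0, sub_zero]
    rw [← neg_div_neg_eq]
    apply div_nonneg (by linarith) (by linarith [hx.2])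
  linarith [hkey, hslope, hε]


theorem stmt_13
    (σ : ℝ) (K K' : ℝ → ℝ)
    (hK' : ∀ t : ℝ, 0 ≤ t → HasDerivAt K (K' t) t)
    (hK'cont : ContinuousOn K' (Ici 0))
    (hKnonneg : ∀ t : ℝ, 0 ≤ t → 0 ≤ K t)
    (hKdec : ∀ t : ℝ, 0 ≤ t → deriv (fun s => Real.exp (σ * s) * K s) t ≤ 0)
    (Ψ Ψt : ℝ → ℝ)
    (hΨcont : ContinuousOn Ψ (Ici 0)) (hΨtcont : ContinuousOn Ψt (Ici 0))
    (hVolterra : ∀ t : ℝ, 0 ≤ t → Ψ t + (∫ τ in (0:ℝ)..t, Ψ τ * K (t - τ)) = Ψt t) :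
    ∀ t : ℝ, 0 ≤ t →
      |Ψ t - Ψt t| ≤ K 0 * ∫ τ in (0:ℝ)..t, Real.exp (-σ * (t - τ)) * |Ψt τ| := by
  intro t ht
  set Ψc : ℝ → ℝ := fun τ => Ψ (max τ 0) with hΨcdef
  set Ψtc : ℝ → ℝ := fun τ => Ψt (max τ 0) with hΨtcdef
  have hΨccont : Continuous Ψc :=
    hΨcont.comp_continuous (continuous_id.max continuous_const) (fun x => le_max_right x 0)
  have hΨtccont : Continuous Ψtc :=
    hΨtcont.comp_continuous (continuous_id.max continuous_const) (fun x => le_max_right x 0)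
  set G : ℝ → ℝ := fun s => Real.exp (σ * s) * K s with hGdef
  set Gd : ℝ → ℝ := fun s => Real.exp (σ * s) * (σ * K s + K' s) with hGddef
  have hGd : ∀ s, 0 ≤ s → HasDerivAt G (Gd s) s := by
    intro s hs
    have h1 : HasDerivAt (fun x : ℝ => σ * x) σ s := by simpa using (hasDerivAt_id s).const_mul σ
    have hexp : HasDerivAt (fun x : ℝ => Real.exp (σ * x)) (Real.exp (σ * s) * σ) s := h1.exp
    have := hexp.mul (hK' s hs)
    have e : Gd s = Real.exp (σ * s) * σ * K s + Real.exp (σ * s) * K' s := by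
      simp only [hGddef]; ring
    rw [e]; exact this
  have hGdneg : ∀ s, 0 ≤ s → Gd s ≤ 0 := by
    intro s hs
    have h := hKdec s hs
    rwa [(hGd s hs).deriv] at h
  have hKcont : ContinuousOn K (Ici 0) := fun s hs => ((hK' s hs).continuousAt).continuousWithinAt
  have hGdcont : ContinuousOn Gd (Ici 0) := by
    apply ContinuousOn.mul
    · exact (Real.continuous_exp.comp (continuous_const.mul continuous_id)).continuousOn
    · exact (continuousOn_const.mul hKcont).add hK'cont
  have hGpos : ∀ s, 0 ≤ s → 0 ≤ G s := fun s hs =>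
    mul_nonneg (Real.exp_pos _).le (hKnonneg s hs)
  set u : ℝ → ℝ := fun τ => Real.exp (σ * τ) * Ψc τ with hudef
  set g : ℝ → ℝ := fun τ => Real.exp (σ * τ) * Ψtc τ with hgdef
  have hucont : Continuous u :=
    (Real.continuous_exp.comp (continuous_const.mul continuous_id)).mul hΨccont
  have hgcont : Continuous g :=
    (Real.continuous_exp.comp (continuous_const.mul continuous_id)).mul hΨtccont
  have heq : ∀ s, 0 ≤ s → u s + ∫ τ in (0:ℝ)..s, u τ * G (s - τ) = g s := by
    intro s hs
    have hV := hVolterra s hs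
    have h1 : (∫ τ in (0:ℝ)..s, u τ * G (s - τ))
        = ∫ τ in (0:ℝ)..s, Real.exp (σ * s) * (Ψ τ * K (s - τ)) := by
      apply intervalIntegral.integral_congr
      intro τ hτ
      rw [uIcc_of_le hs] at hτ
      simp only [hudef, hGdef, hΨcdef]
      rw [max_eq_left hτ.1]
      have hkey : Real.exp (σ * τ) * Real.exp (σ * (s - τ)) = Real.exp (σ * s) := by
        rw [← Real.exp_add]; congr 1; ring
      linear_combination (Ψ τ * K (s - τ)) * hkey
    rw [h1, intervalIntegral.integral_const_mul]
    simp only [hudef, hgdef, hΨcdef, hΨtcdef, max_eq_left hs]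
    linear_combination Real.exp (σ * s) * hV
  have hup := upper_bound G Gd u g hGd hGdcont hGpos hGdneg hucont hgcont heq
  have hlo := upper_bound G Gd (fun τ => -u τ) (fun τ => -g τ) hGd hGdcont hGpos hGdneg
    hucont.neg hgcont.neg (by
      intro s hs
      have h := heq s hs
      have h2 : (∫ τ in (0:ℝ)..s, -u τ * G (s - τ)) = -∫ τ in (0:ℝ)..s, u τ * G (s - τ) := by
        rw [← intervalIntegral.integral_neg]
        apply intervalIntegral.integral_congr
        intro τ _; ring
      show -u s + (∫ τ in (0:ℝ)..s, -u τ * G (s - τ)) = -g s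
      rw [h2]; linarith)
  set P : ℝ → ℝ := fun x => ∫ τ in (0:ℝ)..x, u τ with hPdef
  have hPcont : Continuous P := ftc_cont hucont
  set Qp : ℝ → ℝ := fun x => ∫ τ in (0:ℝ)..x, max (g τ) 0 with hQpdef
  set Qm : ℝ → ℝ := fun x => ∫ τ in (0:ℝ)..x, max (-g τ) 0 with hQmdef
  set m : ℝ := ∫ τ in (0:ℝ)..t, |g τ| with hmdef
  have hgp : Continuous (fun τ => max (g τ) 0) := hgcont.max continuous_const
  have hgm : Continuous (fun τ => max (-g τ) 0) := hgcont.neg.max continuous_const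
  have hsum : Qp t + Qm t = m := by
    rw [hQpdef, hQmdef, hmdef, ← intervalIntegral.integral_add
      (hgp.intervalIntegrable 0 t) (hgm.intervalIntegrable 0 t)]
    apply intervalIntegral.integral_congr
    intro τ _
    exact max_zero_add_max_neg_zero_eq_abs_self (g τ)
  have hQpnon : ∀ x, 0 ≤ x → 0 ≤ Qp x := fun x hx =>
    intervalIntegral.integral_nonneg hx (fun τ _ => le_max_right _ _)
  have hQmnon : ∀ x, 0 ≤ x → 0 ≤ Qm x := fun x hx =>
    intervalIntegral.integral_nonneg hx (fun τ _ => le_max_right _ _)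
  have hPup : ∀ τ, τ ∈ Icc (0:ℝ) t → P τ ≤ Qp τ := fun τ hτ => hup τ hτ.1
  have hPlo : ∀ τ, τ ∈ Icc (0:ℝ) t → -Qm τ ≤ P τ := by
    intro τ hτ
    have h := hlo τ hτ.1
    rw [intervalIntegral.integral_neg] at h
    simp only [hPdef]
    linarith
  have hQpm : ∀ τ, τ ∈ Icc (0:ℝ) t → Qp τ ≤ Qp t :=
    fun τ hτ => primitive_mono hgp (fun x => le_max_right _ _) hτ.2
  have hQmm : ∀ τ, τ ∈ Icc (0:ℝ) t → Qm τ ≤ Qm t :=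
    fun τ hτ => primitive_mono hgm (fun x => le_max_right _ _) hτ.2
  have htmem : t ∈ Icc (0:ℝ) t := ⟨ht, le_refl _⟩
  have hPtb : |P t| ≤ m := by
    rw [abs_le]
    constructor
    · have := hPlo t htmem; have := hQpnon t ht; linarith [hQmm t htmem, hsum]
    · have := hPup t htmem; have := hQmnon t ht; linarith [hsum]
  have hPdiff : ∀ τ, τ ∈ Icc (0:ℝ) t → |P τ - P t| ≤ m := by
    intro τ hτ
    rw [abs_le]
    have h1 := hPup τ hτ; have h2 := hPlo τ hτ
    have h3 := hPup t htmem; have h4 := hPlo t htmem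
    have h5 := hQpm τ hτ; have h6 := hQmm τ hτ
    constructor <;> linarith [hsum]
  -- convolution identity and regrouping
  have hibp := conv_ibp G Gd u hGd hGdcont hucont ht
  have heqt := heq t ht
  have hconst : (∫ τ in (0:ℝ)..t, Gd (t - τ) * P t) = (G t - G 0) * P t := by
    rw [intervalIntegral.integral_mul_const, gd_integral hGd hGdcont ht]
  have hsplit : (∫ τ in (0:ℝ)..t, Gd (t - τ) * (P τ - P t))
      = (∫ τ in (0:ℝ)..t, Gd (t - τ) * P τ) - (G t - G 0) * P t := by
    rw [← hconst, ← intervalIntegral.integral_sub (f := fun τ => Gd (t - τ) * P τ)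
      (g := fun τ => Gd (t - τ) * P t)
      (((contOn_comp_sub hGdcont ht).mul hPcont.continuousOn).intervalIntegrable)
      (((contOn_comp_sub hGdcont ht).mul continuousOn_const).intervalIntegrable)]
    apply intervalIntegral.integral_congr
    intro τ _; ring
  have hgut : g t - u t = G t * P t + ∫ τ in (0:ℝ)..t, Gd (t - τ) * (P τ - P t) := by
    rw [hsplit]
    simp only [hPdef]
    linarith [hibp, heqt]
  have habs2 : |∫ τ in (0:ℝ)..t, Gd (t - τ) * (P τ - P t)| ≤ (G 0 - G t) * m := by
    have h0 : |∫ τ in (0:ℝ)..t, Gd (t - τ) * (P τ - P t)|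
        ≤ ∫ τ in (0:ℝ)..t, |Gd (t - τ) * (P τ - P t)| :=
      intervalIntegral.abs_integral_le_integral_abs ht
    have h1 : (∫ τ in (0:ℝ)..t, |Gd (t - τ) * (P τ - P t)|)
        ≤ ∫ τ in (0:ℝ)..t, (-Gd (t - τ)) * m := by
      apply intervalIntegral.integral_mono_on ht
      · exact (((contOn_comp_sub hGdcont ht).mul
          (hPcont.sub continuous_const).continuousOn).abs).intervalIntegrable
      · exact (((contOn_comp_sub hGdcont ht).neg).mul continuousOn_const).intervalIntegrable
      · intro τ hτ
        rw [abs_mul, abs_of_nonpos (hGdneg (t - τ) (by linarith [hτ.2]))]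
        have hmn : 0 ≤ -Gd (t - τ) := by linarith [hGdneg (t - τ) (by linarith [hτ.2] : (0:ℝ) ≤ t - τ)]
        exact mul_le_mul_of_nonneg_left (hPdiff τ hτ) hmn
    have h2 : (∫ τ in (0:ℝ)..t, (-Gd (t - τ)) * m) = (G 0 - G t) * m := by
      have : (∫ τ in (0:ℝ)..t, (-Gd (t - τ)) * m)
          = -((∫ τ in (0:ℝ)..t, Gd (t - τ)) * m) := by
        rw [← intervalIntegral.integral_mul_const, ← intervalIntegral.integral_neg]
        apply intervalIntegral.integral_congr; intro τ _; ring
      rw [this, gd_integral hGd hGdcont ht]; ring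
    linarith
  have hGtm : |G t * P t| ≤ G t * m := by
    rw [abs_mul, abs_of_nonneg (hGpos t ht)]
    exact mul_le_mul_of_nonneg_left hPtb (hGpos t ht)
  have hfinal : |g t - u t| ≤ G 0 * m := by
    rw [hgut]
    calc |G t * P t + ∫ τ in (0:ℝ)..t, Gd (t - τ) * (P τ - P t)|
        ≤ |G t * P t| + |∫ τ in (0:ℝ)..t, Gd (t - τ) * (P τ - P t)| := abs_add_le _ _
      _ ≤ G t * m + (G 0 - G t) * m := add_le_add hGtm habs2
      _ = G 0 * m := by ring
  -- translate back
  have hG0 : G 0 = K 0 := by simp [hGdef]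
  have hgu : g t - u t = Real.exp (σ * t) * (Ψt t - Ψ t) := by
    simp only [hgdef, hudef, hΨcdef, hΨtcdef, max_eq_left ht]
    ring
  have hRHS : (∫ τ in (0:ℝ)..t, Real.exp (-σ * (t - τ)) * |Ψt τ|)
      = Real.exp (-(σ * t)) * m := by
    rw [hmdef, ← intervalIntegral.integral_const_mul]
    apply intervalIntegral.integral_congr
    intro τ hτ
    rw [uIcc_of_le ht] at hτ
    simp only [hgdef, hΨtcdef, max_eq_left hτ.1]
    rw [abs_mul, Real.abs_exp, ← mul_assoc, ← Real.exp_add]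
    congr 2
    ring
  rw [hG0] at hfinal
  rw [hRHS]
  have hx : Real.exp (σ * t) * |Ψt t - Ψ t| ≤ K 0 * m := by
    rw [← Real.abs_exp (σ * t), ← abs_mul, ← hgu]
    exact hfinal
  have hcomm : |Ψ t - Ψt t| = |Ψt t - Ψ t| := abs_sub_comm _ _
  have hepos : (0:ℝ) < Real.exp (-(σ * t)) := Real.exp_pos _
  have hee : Real.exp (-(σ * t)) * Real.exp (σ * t) = 1 := by
    rw [← Real.exp_add]; simp
  calc |Ψ t - Ψt t| = Real.exp (-(σ * t)) * (Real.exp (σ * t) * |Ψt t - Ψ t|) := by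
        rw [hcomm, ← mul_assoc, hee, one_mul]
    _ ≤ Real.exp (-(σ * t)) * (K 0 * m) := by
        exact mul_le_mul_of_nonneg_left hx hepos.le
    _ = K 0 * (Real.exp (-(σ * t)) * m) := by ring
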